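/- If w ∈ ℝ^3 \ {0} satisfies E(p+w) = E(p) + E(w) for p ≠ 0, then w·p ≤ |p||w| sqrt(κ1 + κ2|w|^2) / sqrt(κ1 + 2κ2|p|^2 + 2κ2|w|^2). In particular, the cosine of the angle θ between w and p satisfies cos θ ≤ sqrt(κ1 + κ2|w|^2)/sqrt(κ1 + 2κ2|p|^2 + 2κ2|w|^2). -/

import Mathlib

set_option maxHeartbeats 1000000


noncomputable def Edisp (κ1 κ2 : ℝ) (p : EuclideanSpace ℝ (Fin 3)) : ℝ :=
  Real.sqrt (κ1 * ‖p‖ ^ 2 + κ2 * ‖p‖ ^ 4)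

/-- If `w ≠ 0` satisfies `E(p+w) = E(p) + E(w)` for `p ≠ 0`, then
`w·p ≤ |p||w| √(κ1 + κ2|w|²)/√(κ1 + 2κ2|p|² + 2κ2|w|²)`; in particular the
cosine of the angle between `w` and `p` is bounded by the same ratio. -/
theorem resonance_cos_bound (κ1 κ2 : ℝ) (hκ1 : 0 < κ1) (hκ2 : 0 < κ2)
    (p w : EuclideanSpace ℝ (Fin 3)) (hp : p ≠ 0) (hw : w ≠ 0)
    (hres : Edisp κ1 κ2 (p + w) = Edisp κ1 κ2 p + Edisp κ1 κ2 w) :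
    (inner ℝ w p : ℝ) ≤ ‖p‖ * ‖w‖ * Real.sqrt (κ1 + κ2 * ‖w‖ ^ 2) /
        Real.sqrt (κ1 + 2 * κ2 * ‖p‖ ^ 2 + 2 * κ2 * ‖w‖ ^ 2) ∧
    (inner ℝ w p : ℝ) / (‖w‖ * ‖p‖) ≤ Real.sqrt (κ1 + κ2 * ‖w‖ ^ 2) /
        Real.sqrt (κ1 + 2 * κ2 * ‖p‖ ^ 2 + 2 * κ2 * ‖w‖ ^ 2) := by
  have hpn : 0 < ‖p‖ := norm_pos_iff.mpr hp
  have hwn : 0 < ‖w‖ := norm_pos_iff.mpr hw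
  set a : ℝ := ‖p‖ ^ 2 with ha
  set b : ℝ := ‖w‖ ^ 2 with hb
  set t : ℝ := inner ℝ w p with ht
  have ha0 : 0 < a := by positivity
  have hb0 : 0 < b := by positivity
  have hD : (0:ℝ) < κ1 + 2 * κ2 * a + 2 * κ2 * b := by positivity
  have hN : (0:ℝ) < κ1 + κ2 * b := by positivity
  have hsD : 0 < Real.sqrt (κ1 + 2 * κ2 * a + 2 * κ2 * b) := Real.sqrt_pos.mpr hD
  -- the squared resonance relation
  have hpw : ‖p + w‖ ^ 2 = a + 2 * t + b := by
    rw [norm_add_sq_real, real_inner_comm w p, ← ht, ← ha, ← hb]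
  clear_value a b t
  have hpw4 : ‖p + w‖ ^ 4 = (a + 2 * t + b) ^ 2 := by
    rw [show ‖p + w‖ ^ 4 = (‖p + w‖ ^ 2) ^ 2 by ring, hpw]
  have ha4 : ‖p‖ ^ 4 = a ^ 2 := by rw [ha]; ring
  have hb4 : ‖w‖ ^ 4 = b ^ 2 := by rw [hb]; ring
  set S : ℝ := Real.sqrt ((κ1 * a + κ2 * a ^ 2) * (κ1 * b + κ2 * b ^ 2)) with hS
  have hS0 : 0 ≤ S := Real.sqrt_nonneg _
  have hS2 : S ^ 2 = (κ1 * a + κ2 * a ^ 2) * (κ1 * b + κ2 * b ^ 2) :=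
    Real.sq_sqrt (by positivity)
  have hSdef : S = Real.sqrt ((κ1 * a + κ2 * a ^ 2) * (κ1 * b + κ2 * b ^ 2)) := hS
  clear_value S
  have hEp : Edisp κ1 κ2 p = Real.sqrt (κ1 * a + κ2 * a ^ 2) := by
    rw [Edisp, ha4, ← ha]
  have hEw : Edisp κ1 κ2 w = Real.sqrt (κ1 * b + κ2 * b ^ 2) := by
    rw [Edisp, hb4, ← hb]
  have hEpEw : Edisp κ1 κ2 p * Edisp κ1 κ2 w = S := by
    rw [hEp, hEw, hSdef, Real.sqrt_mul (by positivity)]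
  have hsq : κ1 * (a + 2 * t + b) + κ2 * (a + 2 * t + b) ^ 2 =
      (κ1 * a + κ2 * a ^ 2) + (κ1 * b + κ2 * b ^ 2) + 2 * S := by
    have habt : 0 ≤ a + 2 * t + b := hpw ▸ sq_nonneg ‖p + w‖
    have e1 : κ1 * (a + 2 * t + b) + κ2 * (a + 2 * t + b) ^ 2 =
        (Edisp κ1 κ2 p + Edisp κ1 κ2 w) ^ 2 := by
      rw [← hres, Edisp, hpw, hpw4,
        Real.sq_sqrt (add_nonneg (mul_nonneg hκ1.le habt) (mul_nonneg hκ2.le (sq_nonneg _)))]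
    have e2 : (Edisp κ1 κ2 p + Edisp κ1 κ2 w) ^ 2 =
        (κ1 * a + κ2 * a ^ 2) + (κ1 * b + κ2 * b ^ 2) + 2 * S := by
      have hp2 : (Edisp κ1 κ2 p) ^ 2 = κ1 * a + κ2 * a ^ 2 := by
        rw [hEp]; exact Real.sq_sqrt (by positivity)
      have hw2 : (Edisp κ1 κ2 w) ^ 2 = κ1 * b + κ2 * b ^ 2 := by
        rw [hEw]; exact Real.sq_sqrt (by positivity)
      linear_combination hp2 + hw2 + 2 * hEpEw
    rw [e1, e2]
  have heq : κ1 * t + 2 * κ2 * t ^ 2 + 2 * κ2 * t * (a + b) + κ2 * a * b = S := by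
    linear_combination hsq / 2
  -- key bound
  have key : t * Real.sqrt (κ1 + 2 * κ2 * a + 2 * κ2 * b) ≤
      ‖p‖ * ‖w‖ * Real.sqrt (κ1 + κ2 * b) := by
    rcases le_or_gt t 0 with htle | htpos
    · calc t * Real.sqrt (κ1 + 2 * κ2 * a + 2 * κ2 * b) ≤ 0 :=
            mul_nonpos_of_nonpos_of_nonneg htle (Real.sqrt_nonneg _)
        _ ≤ ‖p‖ * ‖w‖ * Real.sqrt (κ1 + κ2 * b) := by positivity
    · have h1 : t * (κ1 + 2 * κ2 * a + 2 * κ2 * b) ≤ S - κ2 * a * b := by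
        nlinarith [mul_nonneg hκ2.le (sq_nonneg t)]
      have hh1 : 0 ≤ 2 * κ2 * a * b * S :=
        mul_nonneg (by positivity) hS0
      have hh2 : κ2 * a * b * (κ2 * a * b) ≤
          κ2 * a * b * ((κ1 + κ2 * b) * (a + 2 * b)) := by
        apply mul_le_mul_of_nonneg_left _ (by positivity)
        nlinarith [mul_pos hκ1 ha0, mul_pos (mul_pos hκ2 hb0) hb0, mul_pos hκ1 hb0]
      have h2 : (S - κ2 * a * b) ^ 2 ≤
          a * b * (κ1 + κ2 * b) * (κ1 + 2 * κ2 * a + 2 * κ2 * b) := by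
        nlinarith [hS2, hh1, hh2]
      have htD0 : 0 ≤ t * (κ1 + 2 * κ2 * a + 2 * κ2 * b) :=
        mul_nonneg htpos.le hD.le
      have h3 : (t * (κ1 + 2 * κ2 * a + 2 * κ2 * b)) ^ 2 ≤ (S - κ2 * a * b) ^ 2 :=
        pow_le_pow_left₀ htD0 h1 2
      have hq : t ^ 2 * (κ1 + 2 * κ2 * a + 2 * κ2 * b) ≤ a * b * (κ1 + κ2 * b) := by
        have h4 : t ^ 2 * (κ1 + 2 * κ2 * a + 2 * κ2 * b) * (κ1 + 2 * κ2 * a + 2 * κ2 * b) ≤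
            a * b * (κ1 + κ2 * b) * (κ1 + 2 * κ2 * a + 2 * κ2 * b) := by
          calc t ^ 2 * (κ1 + 2 * κ2 * a + 2 * κ2 * b) * (κ1 + 2 * κ2 * a + 2 * κ2 * b)
              = (t * (κ1 + 2 * κ2 * a + 2 * κ2 * b)) ^ 2 := by ring
            _ ≤ (S - κ2 * a * b) ^ 2 := h3
            _ ≤ _ := h2
        exact le_of_mul_le_mul_right h4 hD
      have hsqrt : Real.sqrt (t ^ 2 * (κ1 + 2 * κ2 * a + 2 * κ2 * b)) ≤
          Real.sqrt (a * b * (κ1 + κ2 * b)) := Real.sqrt_le_sqrt hq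
      have lhs_eq : Real.sqrt (t ^ 2 * (κ1 + 2 * κ2 * a + 2 * κ2 * b)) =
          t * Real.sqrt (κ1 + 2 * κ2 * a + 2 * κ2 * b) := by
        rw [Real.sqrt_mul (sq_nonneg t), Real.sqrt_sq htpos.le]
      have rhs_eq : Real.sqrt (a * b * (κ1 + κ2 * b)) =
          ‖p‖ * ‖w‖ * Real.sqrt (κ1 + κ2 * b) := by
        rw [Real.sqrt_mul (by positivity), Real.sqrt_mul (by positivity : (0:ℝ) ≤ a),
          ha, hb, Real.sqrt_sq hpn.le, Real.sqrt_sq hwn.le]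
      rw [lhs_eq, rhs_eq] at hsqrt
      exact hsqrt
  constructor
  · rw [le_div_iff₀ hsD]
    exact key
  · rw [div_le_div_iff₀ (by positivity) hsD]
    calc t * Real.sqrt (κ1 + 2 * κ2 * a + 2 * κ2 * b)
        ≤ ‖p‖ * ‖w‖ * Real.sqrt (κ1 + κ2 * b) := key
      _ = Real.sqrt (κ1 + κ2 * b) * (‖w‖ * ‖p‖) := by ring
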